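/- Let $\mathcal{D}$ be a triangulated category with t-structure $t$ such that $\mathcal{D}$ has derived projectives with respect to $t$ (every projective object of $\heartsuit_t$ is $H_t^0$ of a derived projective). Then $H_t^0$ restricts to an equivalence of categories $\mathrm{DProj}_t(\mathcal{D}) \to \mathrm{Proj}(\heartsuit_t)$ between the full subcategory of derived projective objects and the full subcategory of projective objects of the heart. -/

import Mathlib

open CategoryTheory Limits Pretriangulated

namespace Paper

universe v u

variable {C : Type u} [Category.{v} C] [Preadditive C] [HasZeroObject C]
  [HasShift C ℤ] [∀ n : ℤ, (shiftFunctor C n).Additive] [Pretriangulated C]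

open CategoryTheory.Triangulated

/-- The right perpendicular of a class of objects. -/
def rPerp (T : Set C) : Set C := {Y | ∀ X ∈ T, ∀ f : X ⟶ Y, f = 0}

/-- The left perpendicular of a class of objects. -/
def lPerp (T : Set C) : Set C := {X | ∀ Y ∈ T, ∀ f : X ⟶ Y, f = 0}

/-- `S^{⊥_{>0}}`. -/
def perpGT (S : Set C) : Set C := {X | ∀ P ∈ S, ∀ m : ℤ, 0 < m → ∀ f : P ⟶ X⟦m⟧, f = 0}

/-- `S^{⊥_{<0}}`. -/
def perpLT (S : Set C) : Set C := {X | ∀ P ∈ S, ∀ m : ℤ, m < 0 → ∀ f : P ⟶ X⟦m⟧, f = 0}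

/-- The pair `(S^{⊥_{>0}}, S^{⊥_{<0}})` is the t-structure `t`. -/
def IsSiltingTStructureFor (S : Set C) (t : TStructure C) : Prop :=
  (∀ X : C, t.le 0 X ↔ X ∈ perpGT S) ∧ (∀ X : C, t.ge 0 X ↔ X ∈ perpLT S)

/-- `X` is a retract (direct summand) of `Y`. -/
def IsRetractOf (X Y : C) : Prop := ∃ (i : X ⟶ Y) (r : Y ⟶ X), i ≫ r = 𝟙 X


/-- An indecomposable object: nonzero, and not a nontrivial biproduct. -/
def IndecObj {A : Type*} [Category A] [Limits.HasZeroMorphisms A]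
    [HasBinaryBiproducts A] (X : A) : Prop :=
  ¬ IsZero X ∧ ∀ Y Z : A, Nonempty (X ≅ Y ⊞ Z) → IsZero Y ∨ IsZero Z

section Biprod
variable [HasFiniteBiproducts C]

/-- The Karoubi closure: direct summands of finite coproducts of objects of `S`. -/
def Kar (S : Set C) : Set C :=
  {X | ∃ (n : ℕ) (f : Fin n → C), (∀ i, f i ∈ S) ∧ IsRetractOf X (⨁ f)}

/-- A class of objects is Krull–Schmidt: every object is a finite biproduct of
objects of the class with local endomorphism rings. -/
def KrullSchmidtOn (T : Set C) : Prop :=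
  ∀ X ∈ T, ∃ (n : ℕ) (f : Fin n → C),
    (∀ i, f i ∈ T ∧ IsLocalRing (End (f i))) ∧ Nonempty (X ≅ ⨁ f)

/-- The category `C` is Krull–Schmidt. -/
def IsKrullSchmidt : Prop :=
  ∀ X : C, ∃ (n : ℕ) (f : Fin n → C),
    (∀ i, IsLocalRing (End (f i))) ∧ Nonempty (X ≅ ⨁ f)

/-- A silting collection: pairwise non-isomorphic indecomposables whose Karoubi
closure is Krull–Schmidt, such that the perpendicular pair is the t-structure `t`. -/
structure IsSiltingCollection (S : Set C) (t : TStructure C) : Prop where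
  indec : ∀ P ∈ S, IndecObj P
  pairwise_noniso : ∀ P ∈ S, ∀ Q ∈ S, P ≠ Q → IsEmpty (P ≅ Q)
  kar_ks : KrullSchmidtOn (Kar S)
  tstr : IsSiltingTStructureFor S t

end Biprod

/-- Derived projective objects with respect to a t-structure. -/
def IsDerivedProjective (t : TStructure C) (P : C) : Prop :=
  t.le 0 P ∧ ∀ (X : C), t.le 0 X → ∀ f : P ⟶ X⟦(1 : ℤ)⟧, f = 0

/-- The heart of a t-structure, as a class of objects. -/
def heartSet (t : TStructure C) : Set C := {X | t.le 0 X ∧ t.ge 0 X}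

/-- The heart of a t-structure, as a full subcategory. -/
abbrev Heart (t : TStructure C) := ObjectProperty.FullSubcategory (fun X => X ∈ heartSet t)

instance (P : C → Prop) : Preadditive (ObjectProperty.FullSubcategory P) where
  homGroup X Y := InducedCategory.homEquiv.addCommGroup
  add_comp _ _ _ f f' g := by ext; exact Preadditive.add_comp _ _ _ f.hom f'.hom g.hom
  comp_add _ _ _ f g g' := by ext; exact Preadditive.comp_add _ _ _ f.hom g.hom g'.hom

/-- Truncation data for a t-structure: the truncation functors `t_{≤0}` (right adjoint
to the inclusion of `D^{t≤0}`), `t_{≥0}` (left adjoint to the inclusion of `D^{t≥0}`),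
and the zeroth cohomology functor `H = t_{≤0} ∘ t_{≥0}`. -/
structure TruncationData (t : TStructure C) where
  /-- the zeroth cohomology functor -/
  H : C ⥤ C
  H_heart : ∀ X : C, H.obj X ∈ heartSet t
  τle : C ⥤ C
  τleCounit : τle ⟶ 𝟭 C
  τle_mem : ∀ X : C, t.le 0 (τle.obj X)
  τle_fac : ∀ (X Z : C), t.le 0 Z → ∀ f : Z ⟶ X,
    ∃! g : Z ⟶ τle.obj X, g ≫ τleCounit.app X = f
  τge : C ⥤ C
  τgeUnit : 𝟭 C ⟶ τge
  τge_mem : ∀ X : C, t.ge 0 (τge.obj X)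
  τge_fac : ∀ (X Z : C), t.ge 0 Z → ∀ f : X ⟶ Z,
    ∃! g : τge.obj X ⟶ Z, τgeUnit.app X ≫ g = f
  H_eq : H = τge ⋙ τle

/-- The zeroth cohomology functor, valued in the heart. -/
def TruncationData.Hh {t : TStructure C} (TD : TruncationData t) : C ⥤ Heart t :=
  ObjectProperty.lift _ TD.H TD.H_heart

/-- A projective cover: an essential epimorphism from a projective object. -/
def IsProjectiveCover {A : Type*} [Category A] {P X : A} (π : P ⟶ X) : Prop :=
  Projective P ∧ Epi π ∧ ∀ (R : A) (g : R ⟶ P), Epi (g ≫ π) → Epi g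

/-- A derived projective cover of `X`. -/
def IsDerivedProjectiveCover {t : TStructure C} (TD : TruncationData t)
    {P X : C} (π : P ⟶ X) : Prop :=
  IsDerivedProjective t P ∧ IsProjectiveCover (TD.Hh.map π)

/-- A t-structure is non-degenerate. -/
def NonDegenerate (t : TStructure C) : Prop :=
  (∀ X : C, (∀ n : ℤ, t.le n X) → IsZero X) ∧ (∀ X : C, (∀ n : ℤ, t.ge n X) → IsZero X)

/-- An object of a category has finite length: bounded chains of subobjects. -/
def FiniteLengthObj {A : Type*} [Category A] (X : A) : Prop :=
  ∃ n : ℕ, ∀ s : Fin (n + 1) → Subobject X, ¬ StrictMono s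

/-- `D` has derived projectives: every projective of the heart is `H⁰` of a
derived projective. -/
def HasDerivedProjectives {t : TStructure C} (TD : TruncationData t) : Prop :=
  ∀ Q : Heart t, Projective Q → ∃ P : C, IsDerivedProjective t P ∧ Nonempty (TD.Hh.obj P ≅ Q)

/-- `D` has enough derived projectives. -/
def HasEnoughDerivedProjectives {t : TStructure C} (TD : TruncationData t) : Prop :=
  EnoughProjectives (Heart t) ∧ HasDerivedProjectives TD

/-- The extension closure of a class of objects. -/
inductive ExtClos (T : Set C) : C → Prop
  | of {X : C} : X ∈ T → ExtClos T X
  | zero {X : C} : IsZero X → ExtClos T X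
  | ext {A E B : C} (f : A ⟶ E) (g : E ⟶ B) (h : B ⟶ A⟦(1 : ℤ)⟧) :
      Triangle.mk f g h ∈ (distTriang C) → ExtClos T A → ExtClos T B → ExtClos T E

/-- The Karoubi (retract) closure of a class of objects. -/
def KarClos (T : Set C) : Set C := {X | ∃ Y ∈ T, IsRetractOf X Y}

/-- The triangulated subcategory generated by a class of objects. -/
inductive TriaClos (T : Set C) : C → Prop
  | of {X : C} : X ∈ T → TriaClos T X
  | zero {X : C} : IsZero X → TriaClos T X
  | shift {X : C} (n : ℤ) : TriaClos T X → TriaClos T (X⟦n⟧)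
  | ext {A E B : C} (f : A ⟶ E) (g : E ⟶ B) (h : B ⟶ A⟦(1 : ℤ)⟧) :
      Triangle.mk f g h ∈ (distTriang C) → TriaClos T A → TriaClos T B → TriaClos T E

/-- The thick subcategory generated by a class of objects. -/
inductive ThickClos (T : Set C) : C → Prop
  | of {X : C} : X ∈ T → ThickClos T X
  | zero {X : C} : IsZero X → ThickClos T X
  | shift {X : C} (n : ℤ) : ThickClos T X → ThickClos T (X⟦n⟧)
  | ext {A E B : C} (f : A ⟶ E) (g : E ⟶ B) (h : B ⟶ A⟦(1 : ℤ)⟧) :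
      Triangle.mk f g h ∈ (distTriang C) → ThickClos T A → ThickClos T B → ThickClos T E
  | retract {X Y : C} : IsRetractOf X Y → ThickClos T Y → ThickClos T X

/-- A thick subcategory, as a class of objects. -/
structure IsThickSet (T : Set C) : Prop where
  zero : ∀ X : C, IsZero X → X ∈ T
  shift : ∀ X ∈ T, ∀ n : ℤ, X⟦n⟧ ∈ T
  ext : ∀ (A E B : C) (f : A ⟶ E) (g : E ⟶ B) (h : B ⟶ A⟦(1 : ℤ)⟧),
    Triangle.mk f g h ∈ (distTriang C) → A ∈ T → B ∈ T → E ∈ T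
  retract : ∀ X Y : C, IsRetractOf X Y → Y ∈ T → X ∈ T

/-- A weight structure on the subcategory of `C` given by the class `CC`. -/
structure WeightStructureOn (CC : Set C) where
  le : Set C
  ge : Set C
  le_sub : le ⊆ CC
  ge_sub : ge ⊆ CC
  le_iso : ∀ X Y : C, (X ≅ Y) → X ∈ le → Y ∈ le
  ge_iso : ∀ X Y : C, (X ≅ Y) → X ∈ ge → Y ∈ ge
  le_retract : ∀ X Y : C, IsRetractOf X Y → Y ∈ le → X ∈ le
  ge_retract : ∀ X Y : C, IsRetractOf X Y → Y ∈ ge → X ∈ ge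
  le_shift : ∀ X ∈ le, X⟦(1 : ℤ)⟧ ∈ le
  ge_shift : ∀ X ∈ ge, X⟦(-1 : ℤ)⟧ ∈ ge
  orth : ∀ X : C, X⟦(1 : ℤ)⟧ ∈ ge → ∀ Y ∈ le, ∀ f : X ⟶ Y, f = 0
  decomp : ∀ X ∈ CC, ∃ (A B : C) (f : A ⟶ X) (g : X ⟶ B) (h : B ⟶ A⟦(1 : ℤ)⟧),
    Triangle.mk f g h ∈ (distTriang C) ∧ A⟦(1 : ℤ)⟧ ∈ ge ∧ B ∈ le

namespace WeightStructureOn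

variable {CC : Set C} (w : WeightStructureOn CC)

/-- `C_{w>0}`. -/
def gt : Set C := {X | X⟦(1 : ℤ)⟧ ∈ w.ge}

/-- `C_{w<0}`. -/
def lt : Set C := {X | X⟦(-1 : ℤ)⟧ ∈ w.le}

end WeightStructureOn


section Aux

variable (t : TStructure C)

lemma zero_gen {X Y : C} (a b : ℤ) (hab : a < b) (hX : t.le a X) (hY : t.ge b Y)
    (f : X ⟶ Y) : f = 0 := by
  have hX' : t.le 0 (X⟦a⟧) := t.le_shift a a 0 (by ring) X hX
  have hY' : t.ge (b - a) (Y⟦a⟧) := t.ge_shift b a (b - a) (by ring) Y hY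
  have hY'' : t.ge 1 (Y⟦a⟧) := t.ge_antitone (by omega) _ hY'
  have h0 : (shiftFunctor C a).map f = 0 := t.zero' _ hX' hY''
  apply (shiftFunctor C a).map_injective
  rw [h0, Functor.map_zero]

lemma mem_le_iff (n : ℤ) (X : C) :
    t.le n X ↔ ∀ Y : C, t.ge (n + 1) Y → ∀ f : X ⟶ Y, f = 0 := by
  constructor
  · exact fun hX Y hY f => zero_gen t n (n + 1) (by omega) hX hY f
  · intro hyp
    obtain ⟨A, B, hA, hB, f, g, hc, mem⟩ := t.exists_triangle X n (n + 1) rfl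
    have hg : g = 0 := hyp B hB g
    obtain ⟨e, he⟩ := Triangle.yoneda_exact₃ _ mem (𝟙 B) (by change g ≫ 𝟙 B = 0; rw [hg]; exact zero_comp)
    have he0 : e = 0 := zero_gen t (n - 1) (n + 1) (by omega)
      (t.le_shift n 1 (n - 1) (by ring) A hA) hB e
    have hBzero : IsZero B := by
      rw [IsZero.iff_id_eq_zero, he, he0, comp_zero]; rfl
    have hiso : IsIso ((Triangle.mk f g hc).mor₁) :=
      (Triangle.isZero₃_iff_isIso₁ _ mem).1 hBzero
    haveI : IsIso f := hiso
    exact (t.le n).prop_of_iso (asIso f) hA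

lemma le_ext₂ (T : Triangle C) (hT : T ∈ distTriang C) (n : ℤ)
    (h₁ : t.le n T.obj₁) (h₃ : t.le n T.obj₃) : t.le n T.obj₂ := by
  rw [mem_le_iff] at h₁ h₃ ⊢
  intro Y hY f
  obtain ⟨g, hg⟩ := Triangle.yoneda_exact₂ _ hT f (h₁ Y hY _)
  rw [hg, h₃ Y hY g, comp_zero]

lemma dp_hom_zero {P : C} (hP : IsDerivedProjective t P) {M : C} (hM : t.le (-1) M)
    (f : P ⟶ M) : f = 0 := by
  have hM' : t.le 0 (M⟦(-1 : ℤ)⟧) := t.le_shift (-1) (-1) 0 (by ring) M hM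
  have e : ((M⟦(-1 : ℤ)⟧)⟦(1 : ℤ)⟧ : C) ≅ M := (shiftEquiv C (1 : ℤ)).counitIso.app M
  have h0 : f ≫ e.inv = 0 := hP.2 _ hM' (f ≫ e.inv)
  rw [← Category.comp_id f, ← e.inv_hom_id, ← Category.assoc, h0, zero_comp]

lemma dp_hom_zero' {P : C} (hP : IsDerivedProjective t P) {A : C} (hA : t.le (-1) A)
    (f : P ⟶ A⟦(1 : ℤ)⟧) : f = 0 :=
  dp_hom_zero t hP (t.le_monotone (by omega) _ (t.le_shift (-1) 1 (-2) (by ring) A hA)) f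

end Aux

section TD

variable {t : TStructure C} (TD : TruncationData t)

lemma counit_isIso (X : C) (hX : t.le 0 X) : IsIso (TD.τleCounit.app X) := by
  obtain ⟨g, hg, -⟩ := TD.τle_fac X X hX (𝟙 X)
  obtain ⟨k, hk, hku⟩ := TD.τle_fac X (TD.τle.obj X) (TD.τle_mem X) (TD.τleCounit.app X)
  refine ⟨g, ?_, hg⟩
  have h1 : TD.τleCounit.app X ≫ g = k := hku _
    (show (TD.τleCounit.app X ≫ g) ≫ TD.τleCounit.app X = TD.τleCounit.app X by
      rw [Category.assoc, hg]; simp)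
  have h2 : 𝟙 (TD.τle.obj X) = k := hku _
    (show 𝟙 _ ≫ TD.τleCounit.app X = TD.τleCounit.app X by rw [Category.id_comp])
  exact h1.trans h2.symm

lemma unit_isIso (X : C) (hX : t.ge 0 X) : IsIso (TD.τgeUnit.app X) := by
  obtain ⟨g, hg, -⟩ := TD.τge_fac X X hX (𝟙 X)
  obtain ⟨k, hk, hku⟩ := TD.τge_fac X (TD.τge.obj X) (TD.τge_mem X) (TD.τgeUnit.app X)
  refine ⟨g, hg, ?_⟩
  have h1 : g ≫ TD.τgeUnit.app X = k := hku _
    (show TD.τgeUnit.app X ≫ g ≫ TD.τgeUnit.app X = TD.τgeUnit.app X by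
      rw [← Category.assoc, hg]; simp)
  have h2 : 𝟙 (TD.τge.obj X) = k := hku _
    (show TD.τgeUnit.app X ≫ 𝟙 _ = TD.τgeUnit.app X by rw [Category.comp_id])
  exact h1.trans h2.symm

/-- The canonical map `X ⟶ τ≤0 τ≥0 X` for `X ∈ D^{≤0}`. -/
noncomputable def alphaHom (X : C) (hX : t.le 0 X) : X ⟶ (TD.τge ⋙ TD.τle).obj X :=
  (TD.τle_fac (TD.τge.obj X) X hX (TD.τgeUnit.app X)).exists.choose

lemma alphaHom_spec (X : C) (hX : t.le 0 X) :
    alphaHom TD X hX ≫ TD.τleCounit.app (TD.τge.obj X) = TD.τgeUnit.app X :=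
  (TD.τle_fac (TD.τge.obj X) X hX (TD.τgeUnit.app X)).exists.choose_spec

lemma alphaHom_natural {X Y : C} (f : X ⟶ Y) (hX : t.le 0 X) (hY : t.le 0 Y) :
    alphaHom TD X hX ≫ (TD.τge ⋙ TD.τle).map f = f ≫ alphaHom TD Y hY := by
  obtain ⟨k, hk, hku⟩ := TD.τle_fac (TD.τge.obj Y) X hX (f ≫ TD.τgeUnit.app Y)
  clear hk
  have hnat : TD.τle.map (TD.τge.map f) ≫ TD.τleCounit.app (TD.τge.obj Y) =
      TD.τleCounit.app (TD.τge.obj X) ≫ TD.τge.map f := by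
    simpa using TD.τleCounit.naturality (TD.τge.map f)
  have hnat' : TD.τgeUnit.app X ≫ TD.τge.map f = f ≫ TD.τgeUnit.app Y := by
    simpa using (TD.τgeUnit.naturality f).symm
  have h₁ : (alphaHom TD X hX ≫ (TD.τge ⋙ TD.τle).map f) ≫
      TD.τleCounit.app (TD.τge.obj Y) = f ≫ TD.τgeUnit.app Y := by
    show (alphaHom TD X hX ≫ TD.τle.map (TD.τge.map f)) ≫
      TD.τleCounit.app (TD.τge.obj Y) = f ≫ TD.τgeUnit.app Y
    rw [Category.assoc, hnat, ← Category.assoc, alphaHom_spec, hnat']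
  have h₂ : (f ≫ alphaHom TD Y hY) ≫ TD.τleCounit.app (TD.τge.obj Y) =
      f ≫ TD.τgeUnit.app Y := by
    rw [Category.assoc, alphaHom_spec]
  rw [hku _ h₁, hku _ h₂]

lemma exists_iso_tauge (X : C) (hX : t.le 0 X) :
    ∃ (A B : C) (_ : t.le (-1) A) (_ : t.ge 0 B) (_ : t.le 0 B)
      (f : A ⟶ X) (g : X ⟶ B) (hconn : B ⟶ A⟦(1 : ℤ)⟧)
      (_ : Triangle.mk f g hconn ∈ distTriang C)
      (u : TD.τge.obj X ⟶ B), (TD.τgeUnit.app X ≫ u = g) ∧ IsIso u := by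
  obtain ⟨A, B, hA, hB, f, g, hconn, mem⟩ := t.exists_triangle X (-1) 0 (by omega)
  have hA1 : t.le 0 (A⟦(1 : ℤ)⟧) :=
    t.le_monotone (show (-2 : ℤ) ≤ 0 by omega) _ (t.le_shift (-1) 1 (-2) (by ring) A hA)
  have hBle : t.le 0 B := by
    have := le_ext₂ t _ (rot_of_distTriang _ mem) 0 (by exact hX) (by exact hA1)
    exact this
  obtain ⟨u, hu, huu⟩ := TD.τge_fac X B hB g
  have hfu : f ≫ TD.τgeUnit.app X = 0 :=
    zero_gen t (-1) 0 (by omega) hA (TD.τge_mem X) _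
  obtain ⟨v, hv⟩ : ∃ v : B ⟶ TD.τge.obj X, TD.τgeUnit.app X = g ≫ v :=
    Triangle.yoneda_exact₂ _ mem (TD.τgeUnit.app X) hfu
  obtain ⟨k, hk, hku⟩ := TD.τge_fac X (TD.τge.obj X) (TD.τge_mem X) (TD.τgeUnit.app X)
  have h1 : u ≫ v = 𝟙 (TD.τge.obj X) := by
    have e1 : TD.τgeUnit.app X ≫ (u ≫ v) = TD.τgeUnit.app X := by
      rw [← Category.assoc, hu, ← hv]
    rw [hku _ e1, hku _ (show TD.τgeUnit.app X ≫ 𝟙 _ = TD.τgeUnit.app X by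
      rw [Category.comp_id])]
  have hgsub : g ≫ (v ≫ u - 𝟙 B) = 0 := by
    have hgvu : g ≫ v ≫ u = g := by rw [← Category.assoc, ← hv, hu]
    rw [Preadditive.comp_sub, hgvu, Category.comp_id, sub_self]
  obtain ⟨w, hw⟩ : ∃ w : (A⟦(1 : ℤ)⟧ : C) ⟶ B, v ≫ u - 𝟙 B = hconn ≫ w :=
    Triangle.yoneda_exact₃ _ mem (v ≫ u - 𝟙 B)
      (show (Triangle.mk f g hconn).mor₂ ≫ (v ≫ u - 𝟙 B) = 0 from hgsub)
  have hw0 : w = 0 :=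
    zero_gen t (-2) 0 (by omega) (t.le_shift (-1) 1 (-2) (by ring) A hA) hB w
  have h2 : v ≫ u = 𝟙 B := by
    have hs : v ≫ u - 𝟙 B = 0 := by rw [hw, hw0, comp_zero]
    rwa [sub_eq_zero] at hs
  exact ⟨A, B, hA, hB, hBle, f, g, hconn, mem, u, hu, ⟨⟨v, h1, h2⟩⟩⟩

lemma tauge_le (X : C) (hX : t.le 0 X) : t.le 0 (TD.τge.obj X) := by
  obtain ⟨A, B, hA, hB, hBle, f, g, hconn, mem, u, hu, hui⟩ := exists_iso_tauge TD X hX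
  haveI := hui
  exact (t.le 0).prop_of_iso (asIso u).symm hBle

lemma postcomp_alpha_bijective {P : C} (hP : IsDerivedProjective t P) (X : C)
    (hX : t.le 0 X) :
    Function.Bijective (fun f : P ⟶ X => f ≫ alphaHom TD X hX) := by
  obtain ⟨A, B, hA, hB, hBle, f, g, hconn, mem, u, hu, hui⟩ := exists_iso_tauge TD X hX
  haveI := counit_isIso TD (TD.τge.obj X) (tauge_le TD X hX)
  haveI := hui
  constructor
  · intro f₁ f₂ h12
    have h' : f₁ ≫ TD.τgeUnit.app X = f₂ ≫ TD.τgeUnit.app X := by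
      have := congrArg (fun q => q ≫ TD.τleCounit.app (TD.τge.obj X)) h12
      simpa [alphaHom_spec] using this
    have hg12 : f₁ ≫ g = f₂ ≫ g := by
      rw [← hu, ← Category.assoc, h', Category.assoc]
    have hsub : (f₁ - f₂) ≫ g = 0 := by rw [Preadditive.sub_comp, hg12, sub_self]
    obtain ⟨e, he⟩ : ∃ e : P ⟶ A, f₁ - f₂ = e ≫ f :=
      Triangle.coyoneda_exact₂ _ mem (f₁ - f₂)
        (show (f₁ - f₂) ≫ (Triangle.mk f g hconn).mor₂ = 0 from hsub)
    have he0 : e = 0 := dp_hom_zero t hP hA e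
    have : f₁ - f₂ = 0 := by rw [he, he0, zero_comp]
    rwa [sub_eq_zero] at this
  · intro φ
    set ψ : P ⟶ B := φ ≫ TD.τleCounit.app (TD.τge.obj X) ≫ u with hψ
    have hψ3 : ψ ≫ hconn = 0 := dp_hom_zero' t hP hA _
    obtain ⟨f₀, hf₀⟩ : ∃ f₀ : P ⟶ X, ψ = f₀ ≫ g :=
      Triangle.coyoneda_exact₃ _ mem ψ
        (show ψ ≫ (Triangle.mk f g hconn).mor₃ = 0 from hψ3)
    refine ⟨f₀, ?_⟩
    have hmono : (f₀ ≫ alphaHom TD X hX) ≫ (TD.τleCounit.app (TD.τge.obj X) ≫ u) =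
        φ ≫ (TD.τleCounit.app (TD.τge.obj X) ≫ u) := by
      calc (f₀ ≫ alphaHom TD X hX) ≫ (TD.τleCounit.app (TD.τge.obj X) ≫ u)
          = f₀ ≫ (alphaHom TD X hX ≫ TD.τleCounit.app (TD.τge.obj X)) ≫ u := by
            simp only [Category.assoc]
        _ = f₀ ≫ TD.τgeUnit.app X ≫ u := by rw [alphaHom_spec]
        _ = f₀ ≫ g := by rw [hu]
        _ = ψ := hf₀.symm
        _ = φ ≫ TD.τleCounit.app (TD.τge.obj X) ≫ u := hψ
    exact (cancel_mono (TD.τleCounit.app (TD.τge.obj X) ≫ u)).1 hmono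

lemma precomp_alpha_bijective (X : C) (hX : t.le 0 X) (Z : C) (hZ : t.ge 0 Z) :
    Function.Bijective
      (fun q : (TD.τge ⋙ TD.τle).obj X ⟶ Z => alphaHom TD X hX ≫ q) := by
  haveI := counit_isIso TD (TD.τge.obj X) (tauge_le TD X hX)
  constructor
  · intro q₁ q₂ h
    replace h : alphaHom TD X hX ≫ q₁ = alphaHom TD X hX ≫ q₂ := h
    obtain ⟨k, hk, hku⟩ := TD.τge_fac X Z hZ (alphaHom TD X hX ≫ q₁)
    have e₁ : TD.τgeUnit.app X ≫ (inv (TD.τleCounit.app (TD.τge.obj X)) ≫ q₁) =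
        alphaHom TD X hX ≫ q₁ := by
      rw [← alphaHom_spec TD X hX]
      simp
    have e₂ : TD.τgeUnit.app X ≫ (inv (TD.τleCounit.app (TD.τge.obj X)) ≫ q₂) =
        alphaHom TD X hX ≫ q₁ := by
      rw [h, ← alphaHom_spec TD X hX]
      simp
    have hq := (hku _ e₁).trans (hku _ e₂).symm
    exact (cancel_epi (inv (TD.τleCounit.app (TD.τge.obj X)))).1 hq
  · intro φ
    obtain ⟨k, hk, -⟩ := TD.τge_fac X Z hZ φ
    replace hk : TD.τgeUnit.app X ≫ k = φ := hk
    refine ⟨TD.τleCounit.app (TD.τge.obj X) ≫ k, ?_⟩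
    show alphaHom TD X hX ≫ TD.τleCounit.app (TD.τge.obj X) ≫ k = φ
    rw [← Category.assoc, alphaHom_spec, hk]

/-- Underlying morphism in `C` of a morphism of a full subcategory. -/
def hmap {T : ObjectProperty C} {X Y : ObjectProperty.FullSubcategory T} (f : X ⟶ Y) : X.obj ⟶ Y.obj := f.hom

end TD

/-- if `D` has derived projectives, `H⁰` restricts to an equivalence between
derived projectives and projectives of the heart (fully faithful, with essential image
exactly the projectives). -/
theorem H0_equivalence_derivedProjectives (t : TStructure C) (TD : TruncationData t)
    (h : HasDerivedProjectives TD) :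
    (ObjectProperty.ι (IsDerivedProjective t) ⋙ TD.Hh).Full ∧
    (ObjectProperty.ι (IsDerivedProjective t) ⋙ TD.Hh).Faithful ∧
    (∀ Q : Heart t, Projective Q ↔
      ∃ P : ObjectProperty.FullSubcategory (IsDerivedProjective t),
        Nonempty ((ObjectProperty.ι (IsDerivedProjective t) ⋙ TD.Hh).obj P ≅ Q)) := by
  have hobj : ∀ X : C, TD.H.obj X = (TD.τge ⋙ TD.τle).obj X :=
    fun X => Functor.congr_obj TD.H_eq X
  have hGmap : ∀ {X Y : C} (f : X ⟶ Y),
      TD.H.map f = eqToHom (hobj X) ≫ (TD.τge ⋙ TD.τle).map f ≫ eqToHom (hobj Y).symm :=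
    fun f => Functor.congr_hom TD.H_eq f
  have hGE : ∀ X : C, t.ge 0 ((TD.τge ⋙ TD.τle).obj X) := by
    intro X
    have := (TD.H_heart X).2
    rwa [hobj X] at this
  refine ⟨?_, ?_, ?_⟩
  · -- Full
    refine { map_surjective := ?_ }
    intro P Q φ
    have hP := P.property
    have hQ := Q.property
    obtain ⟨f, hf⟩ := (postcomp_alpha_bijective TD hP Q.obj hQ.1).2
      (alphaHom TD P.obj hP.1 ≫ eqToHom (hobj P.obj).symm ≫
        (hmap φ) ≫ eqToHom (hobj Q.obj))
    replace hf : f ≫ alphaHom TD Q.obj hQ.1 =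
        alphaHom TD P.obj hP.1 ≫ eqToHom (hobj P.obj).symm ≫
          (hmap φ) ≫ eqToHom (hobj Q.obj) := hf
    have hmapeq : (TD.τge ⋙ TD.τle).map f = eqToHom (hobj P.obj).symm ≫
        (hmap φ) ≫ eqToHom (hobj Q.obj) := by
      apply (precomp_alpha_bijective TD P.obj hP.1 _ (hGE Q.obj)).1
      show alphaHom TD P.obj hP.1 ≫ (TD.τge ⋙ TD.τle).map f = _
      rw [alphaHom_natural TD f hP.1 hQ.1, hf]
    refine ⟨ObjectProperty.homMk (P := _) f, ?_⟩
    ext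
    show TD.H.map f = hmap φ
    rw [hGmap f, hmapeq]
    simp only [eqToHom_trans_assoc, eqToHom_refl, Category.id_comp, Category.assoc,
      eqToHom_trans, Category.comp_id]
    erw [Category.assoc, eqToHom_trans, eqToHom_refl, Category.comp_id]
  · -- Faithful
    refine { map_injective := ?_ }
    intro P Q f g hfg
    have hfg' : TD.H.map (hmap f) = TD.H.map (hmap g) := congrArg (fun k => k.hom) hfg
    rw [hGmap (hmap f), hGmap (hmap g)] at hfg'
    rw [cancel_epi, cancel_mono] at hfg'
    have hpost := (postcomp_alpha_bijective TD P.property Q.obj Q.property.1).1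
    have heq1 := alphaHom_natural TD (hmap f) P.property.1 Q.property.1
    have e4 : alphaHom TD P.obj P.property.1 ≫ (TD.τge ⋙ TD.τle).map (hmap f) =
        (hmap g) ≫ alphaHom TD Q.obj Q.property.1 := by
      rw [hfg']; exact alphaHom_natural TD (hmap g) P.property.1 Q.property.1
    exact ObjectProperty.hom_ext (P := _) (hpost (heq1.symm.trans e4))
  · -- essential image
    intro Q
    refine ⟨fun hQproj => ?_, fun hex => ?_⟩
    · obtain ⟨P, hPdp, ⟨iso⟩⟩ := h Q hQproj
      exact ⟨⟨P, hPdp⟩, ⟨iso⟩⟩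
    · obtain ⟨P', ⟨iso⟩⟩ := hex
      refine Projective.of_iso iso ?_
      refine ⟨?_⟩
      intro E X gm e he
      haveI := he
      have hP := P'.property
      obtain ⟨N, c, d, memT⟩ :=
        Pretriangulated.distinguished_cocone_triangle (hmap e)
      have hNle : t.le 0 N := by
        refine le_ext₂ t _ (rot_of_distTriang _ memT) 0 (by exact X.property.1) ?_
        exact t.le_monotone (show (-1 : ℤ) ≤ 0 by omega) _
          (t.le_shift 0 1 (-1) (by ring) E.obj E.property.1)
      obtain ⟨A', B', hA', hB', f', g', hconn', memT'⟩ :=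
        t.exists_triangle N (-1) 0 (by omega)
      have hB'le : t.le 0 B' := le_ext₂ t _ (rot_of_distTriang _ memT') 0 (by exact hNle)
        (t.le_monotone (show (-2 : ℤ) ≤ 0 by omega)
          _ (t.le_shift (-1) 1 (-2) (by ring) A' hA'))
      have hg'0 : g' = 0 := by
        have hcg : c ≫ g' = 0 := by
          have h0 : (hmap e) ≫ c = 0 := comp_distTriang_mor_zero₁₂ _ memT
          let uC : X.obj ⟶ B' := c ≫ g'
          have h1 : e ≫ (ObjectProperty.homMk (P := _) (Y := (⟨B', hB'le, hB'⟩ : Heart t)) uC) =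
              e ≫ (0 : X ⟶ (⟨B', hB'le, hB'⟩ : Heart t)) := by
            ext
            show (hmap e) ≫ (c ≫ g') = (hmap e) ≫ 0
            rw [← Category.assoc, h0, zero_comp, comp_zero]
          exact congrArg (fun k => k.hom) ((cancel_epi e).1 h1)
        obtain ⟨w, hw⟩ : ∃ w : ((E.obj)⟦(1 : ℤ)⟧ : C) ⟶ B', g' = d ≫ w :=
          Triangle.yoneda_exact₃ _ memT g'
            (show (Triangle.mk (hmap e) c d).mor₂ ≫ g' = 0 from hcg)
        have hw0 : w = 0 := zero_gen t (-1) 0 (by omega)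
          (t.le_shift 0 1 (-1) (by ring) E.obj E.property.1) hB' w
        rw [hw, hw0, comp_zero]
      set f0 : P'.obj ⟶ X.obj := alphaHom TD P'.obj hP.1 ≫ eqToHom (hobj P'.obj).symm ≫
        (hmap gm) with hf0
      have hf0c : f0 ≫ c = 0 := by
        obtain ⟨w'', hw''⟩ : ∃ w'' : P'.obj ⟶ A', f0 ≫ c = w'' ≫ f' :=
          Triangle.coyoneda_exact₂ _ memT' (f0 ≫ c)
            (show (f0 ≫ c) ≫ (Triangle.mk f' g' hconn').mor₂ = 0 by
              change (f0 ≫ c) ≫ g' = 0; rw [hg'0, comp_zero])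
        rw [hw'', dp_hom_zero t hP hA' w'', zero_comp]
      obtain ⟨f1, hf1⟩ : ∃ f1 : P'.obj ⟶ E.obj, f0 = f1 ≫ (hmap e) :=
        Triangle.coyoneda_exact₂ _ memT f0
          (show f0 ≫ (Triangle.mk (hmap e) c d).mor₂ = 0 from hf0c)
      obtain ⟨ℓ, hℓ⟩ := (precomp_alpha_bijective TD P'.obj hP.1 E.obj E.property.2).2 f1
      replace hℓ : alphaHom TD P'.obj hP.1 ≫ ℓ = f1 := hℓ
      have hinj := (precomp_alpha_bijective TD P'.obj hP.1 X.obj X.property.2).1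
      have key : ℓ ≫ (hmap e) =
          eqToHom (hobj P'.obj).symm ≫ (hmap gm) := by
        apply hinj
        show alphaHom TD P'.obj hP.1 ≫ ℓ ≫ (hmap e) =
          alphaHom TD P'.obj hP.1 ≫ eqToHom (hobj P'.obj).symm ≫
            (hmap gm)
        rw [← Category.assoc, hℓ, ← hf1, hf0]
      refine ⟨ObjectProperty.homMk (P := _) (X := (ObjectProperty.ι (IsDerivedProjective t) ⋙ TD.Hh).obj P') (Y := E)
        (show TD.H.obj P'.obj ⟶ E.obj from eqToHom (hobj P'.obj) ≫ ℓ), ?_⟩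
      ext
      show (eqToHom (hobj P'.obj) ≫ ℓ) ≫ (hmap e) =
        (hmap gm)
      rw [Category.assoc, key]
      simp
      erw [eqToHom_trans_assoc, eqToHom_refl, Category.id_comp]

end Paper
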